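/- For γ > 1, the number r_γ defined by r_γ ∏_{j=1}^∞ (1 + γ^{−j}) = 1 satisfies log r_γ ≥ −1/(γ−1) + (1/2)·1/(γ²−1) − (1/3)·1/(γ³−1), and hence r_γ ≥ exp(−1/(γ−1) + (1/2)/(γ²−1) − (1/3)/(γ³−1)). -/

import Mathlib

open scoped BigOperators

lemma log_one_add_le_cubic {x : ℝ} (hx : 0 ≤ x) :
    Real.log (1 + x) ≤ x - x ^ 2 / 2 + x ^ 3 / 3 := by
  set g : ℝ → ℝ := fun t => t - t ^ 2 / 2 + t ^ 3 / 3 - Real.log (1 + t) with hg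
  have key : MonotoneOn g (Set.Ici 0) := by
    have hderiv : ∀ t ∈ interior (Set.Ici (0:ℝ)), HasDerivAt g (1 - t + t ^ 2 - 1 / (1 + t)) t := by
      intro t ht
      rw [interior_Ici, Set.mem_Ioi] at ht
      have h1 : HasDerivAt (fun t : ℝ => Real.log (1 + t)) (1 / (1 + t)) t := by
        have := (Real.hasDerivAt_log (by linarith : (1:ℝ) + t ≠ 0)).comp t
          ((hasDerivAt_const t (1:ℝ)).add (hasDerivAt_id t))
        exact this.congr_deriv (by simp)
      have h2 : HasDerivAt (fun t : ℝ => t - t ^ 2 / 2 + t ^ 3 / 3) (1 - t + t ^ 2) t := by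
        have := ((hasDerivAt_id t).sub ((hasDerivAt_pow 2 t).div_const 2)).add
          ((hasDerivAt_pow 3 t).div_const 3)
        exact this.congr_deriv (by norm_num)
      exact h2.sub h1
    apply monotoneOn_of_deriv_nonneg (convex_Ici 0)
    · apply ContinuousOn.sub (by fun_prop)
      apply ContinuousOn.log (by fun_prop)
      intro t ht
      simp only [Set.mem_Ici] at ht
      linarith
    · intro t ht
      exact (hderiv t ht).differentiableAt.differentiableWithinAt
    · intro t ht
      rw [(hderiv t ht).deriv]
      rw [interior_Ici, Set.mem_Ioi] at ht
      rw [sub_nonneg, div_le_iff₀ (by linarith)]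
      nlinarith
  have h0 : g 0 ≤ g x := key (by simp) hx hx
  simp only [hg] at h0
  norm_num at h0
  linarith

theorem r_gamma_lower_bound (γ : ℝ) (hγ : 1 < γ) (r : ℝ) (hr : 0 < r)
    (hdef : r * ∏' j : ℕ, (1 + (1 / γ) ^ (j + 1)) = 1) :
    -1 / (γ - 1) + (1 / 2) * (1 / (γ ^ 2 - 1)) - (1 / 3) * (1 / (γ ^ 3 - 1)) ≤ Real.log r ∧
    Real.exp (-1 / (γ - 1) + (1 / 2) * (1 / (γ ^ 2 - 1)) - (1 / 3) * (1 / (γ ^ 3 - 1))) ≤ r := by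
  have hγ0 : 0 < γ := by linarith
  set c : ℝ := 1 / γ with hc
  have hc0 : 0 < c := by positivity
  have hc1 : c < 1 := by rw [hc, div_lt_one hγ0]; exact hγ
  set x : ℕ → ℝ := fun j => c ^ (j + 1) with hx
  have hx0 : ∀ j, 0 < x j := fun j => pow_pos hc0 _
  have hx1 : ∀ j, x j ≤ c := fun j => by
    calc x j = c ^ (j+1) := rfl
    _ ≤ c ^ 1 := pow_le_pow_of_le_one hc0.le hc1.le (by omega)
    _ = c := pow_one c
  -- geometric sums
  have geom : ∀ d : ℝ, 0 ≤ d → d < 1 → HasSum (fun j : ℕ => d ^ (j + 1)) (d / (1 - d)) := by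
    intro d hd0 hd1
    have h := (hasSum_geometric_of_lt_one hd0 hd1).mul_left d
    rw [show d * (1 - d)⁻¹ = d / (1 - d) from (div_eq_mul_inv d _).symm] at h
    convert h using 2 with j
    · rfl
    ring
  have hval : ∀ k : ℕ, 0 < k → c ^ k / (1 - c ^ k) = 1 / (γ ^ k - 1) := by
    intro k hk
    have hck0 : 0 < c ^ k := pow_pos hc0 k
    have hck1 : c ^ k < 1 := pow_lt_one₀ hc0.le hc1 hk.ne'
    have hγk : 1 < γ ^ k := one_lt_pow₀ hγ hk.ne'
    rw [div_eq_div_iff (by linarith) (by linarith)]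
    rw [hc, div_pow, one_pow]
    field_simp
  have hsum1 : HasSum x (1 / (γ - 1)) := by
    have := geom c hc0.le hc1
    rw [show c / (1 - c) = 1 / (γ - 1) by simpa using hval 1 one_pos] at this
    exact this
  have hd2 : (0:ℝ) ≤ c ^ 2 := by positivity
  have hd2' : c ^ 2 < 1 := by nlinarith
  have hd3 : (0:ℝ) ≤ c ^ 3 := by positivity
  have hd3' : c ^ 3 < 1 := by nlinarith
  have hγ2 : (1:ℝ) < γ ^ 2 := by nlinarith
  have hγ3 : (1:ℝ) < γ ^ 3 := by nlinarith
  have hsum2 : HasSum (fun j => x j ^ 2) (1 / (γ ^ 2 - 1)) := by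
    have := geom (c ^ 2) hd2 hd2'
    rw [hval 2 two_pos] at this
    convert this using 2 with j
    rw [hx]; ring
  have hsum3 : HasSum (fun j => x j ^ 3) (1 / (γ ^ 3 - 1)) := by
    have := geom (c ^ 3) hd3 hd3'
    rw [hval 3 three_pos] at this
    convert this using 2 with j
    rw [hx]; ring
  -- summability of logs
  have hlog_nonneg : ∀ j, 0 ≤ Real.log (1 + x j) := fun j =>
    Real.log_nonneg (by linarith [hx0 j])
  have hlog_le : ∀ j, Real.log (1 + x j) ≤ x j := fun j => by
    have := Real.log_le_sub_one_of_pos (by linarith [hx0 j] : (0:ℝ) < 1 + x j)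
    linarith
  have hsummable_log : Summable (fun j => Real.log (1 + x j)) :=
    Summable.of_nonneg_of_le hlog_nonneg hlog_le hsum1.summable
  -- tprod = exp (tsum log)
  have hpos : ∀ j, (0:ℝ) < 1 + x j := fun j => by linarith [hx0 j]
  have htprod : (∏' j : ℕ, (1 + x j)) = Real.exp (∑' j, Real.log (1 + x j)) := by
    exact (Real.rexp_tsum_eq_tprod hpos hsummable_log).symm
  -- the key bound on the tsum
  have hcubic : ∀ j, Real.log (1 + x j) ≤ x j - x j ^ 2 / 2 + x j ^ 3 / 3 := fun j =>
    log_one_add_le_cubic (hx0 j).le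
  have hsum_ub : HasSum (fun j => x j - x j ^ 2 / 2 + x j ^ 3 / 3)
      (1 / (γ - 1) - (1 / 2) * (1 / (γ ^ 2 - 1)) + (1 / 3) * (1 / (γ ^ 3 - 1))) := by
    have := (hsum1.sub (hsum2.div_const 2)).add (hsum3.div_const 3)
    convert this using 1
    · rfl
    ring
  have htsum_le : (∑' j, Real.log (1 + x j)) ≤
      1 / (γ - 1) - (1 / 2) * (1 / (γ ^ 2 - 1)) + (1 / 3) * (1 / (γ ^ 3 - 1)) := by
    rw [← hsum_ub.tsum_eq]
    exact Summable.tsum_le_tsum hcubic hsummable_log hsum_ub.summable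
  -- conclude
  have hrval : r = Real.exp (-(∑' j, Real.log (1 + x j))) := by
    have hP : (∏' j : ℕ, (1 + (1 / γ) ^ (j + 1))) = Real.exp (∑' j, Real.log (1 + x j)) := htprod
    rw [hP] at hdef
    rw [Real.exp_neg]
    field_simp at hdef ⊢
    linarith [hdef]
  have hlogr : Real.log r = -(∑' j, Real.log (1 + x j)) := by
    rw [hrval, Real.log_exp]
  constructor
  · rw [hlogr]
    have : -1 / (γ - 1) + (1 / 2) * (1 / (γ ^ 2 - 1)) - (1 / 3) * (1 / (γ ^ 3 - 1)) =
        -(1 / (γ - 1) - (1 / 2) * (1 / (γ ^ 2 - 1)) + (1 / 3) * (1 / (γ ^ 3 - 1))) := by ring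
    rw [this]
    exact neg_le_neg htsum_le
  · rw [hrval]
    apply Real.exp_le_exp.mpr
    have : -1 / (γ - 1) + (1 / 2) * (1 / (γ ^ 2 - 1)) - (1 / 3) * (1 / (γ ^ 3 - 1)) =
        -(1 / (γ - 1) - (1 / 2) * (1 / (γ ^ 2 - 1)) + (1 / 3) * (1 / (γ ^ 3 - 1))) := by ring
    rw [this]
    exact neg_le_neg htsum_le
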